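/- The symmetric group S_n is exactly the set of maximal-length elements of R_n under ℓ: an element x of R_n satisfies ℓ(x) = binomial(n+1,2) + inv(x) with all entries nonzero if and only if x is a permutation, and the Bruhat–Chevalley–Renner order on R_n restricted to S_n coincides with the strong Bruhat order on S_n. -/

import Mathlib

open Finset

variable {n : ℕ}

/-- An element of the rook monoid `R_n` in one-line notation: a sequence of
entries in `{0,...,n}` whose nonzero entries are pairwise distinct. -/
def IsRook (n : ℕ) (a : Fin n → ℕ) : Prop :=
  (∀ i, a i ≤ n) ∧ ∀ i j, a i ≠ 0 → a i = a j → i = j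

/-- number of inversions -/
def rinv (a : Fin n → ℕ) : ℕ :=
  ((univ ×ˢ univ).filter fun p : Fin n × Fin n => p.1 < p.2 ∧ a p.2 < a p.1).card

/-- number of coinversion pairs -/
def rcoinv (a : Fin n → ℕ) : ℕ :=
  ((univ ×ˢ univ).filter fun p : Fin n × Fin n => p.1 < p.2 ∧ 0 < a p.1 ∧ a p.1 < a p.2).card

/-- the length function ℓ -/
def rlen (a : Fin n → ℕ) : ℕ := (∑ i, a i) + rinv a

/-- type 1 generating relation: increase a single entry -/
def Step1 (a b : Fin n → ℕ) : Prop := ∃ i, a i < b i ∧ ∀ j, j ≠ i → a j = b j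

/-- type 2 generating relation: swap two entries, larger one first -/
def Step2 (a b : Fin n → ℕ) : Prop :=
  ∃ i j, i < j ∧ a i < a j ∧ b i = a j ∧ b j = a i ∧ ∀ k, k ≠ i → k ≠ j → a k = b k

/-- the Bruhat-Chevalley-Renner order on `R_n` -/
def RookLe (n : ℕ) (a b : Fin n → ℕ) : Prop :=
  Relation.ReflTransGen (fun x y => IsRook n x ∧ IsRook n y ∧ (Step1 x y ∨ Step2 x y)) a b

def RookLt (n : ℕ) (a b : Fin n → ℕ) : Prop := RookLe n a b ∧ a ≠ b

/-- covering relation of the Bruhat-Chevalley-Renner order -/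
def RookCov (n : ℕ) (a b : Fin n → ℕ) : Prop :=
  RookLt n a b ∧ ∀ z, RookLt n a z → RookLt n z b → False

/-- the edge labeling `F` on covering relations -/
noncomputable def Flabel (a b : Fin n → ℕ) : ℕ × ℕ := by
  classical
  exact if h : ∃ i, a i < b i ∧ ∀ j, j ≠ i → a j = b j then (a h.choose, b h.choose)
  else if h2 : ∃ p : Fin n × Fin n, p.1 < p.2 ∧ a p.1 < a p.2 ∧ b p.1 = a p.2 ∧ b p.2 = a p.1 ∧
      ∀ k, k ≠ p.1 → k ≠ p.2 → a k = b k then (a h2.choose.1, a h2.choose.2)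
  else (0, 0)

/-- lexicographic (strict) order on labels -/
def pairLt (p q : ℕ × ℕ) : Prop := p.1 < q.1 ∨ (p.1 = q.1 ∧ p.2 < q.2)

def pairLe (p q : ℕ × ℕ) : Prop := p = q ∨ pairLt p q

/-- lexicographic comparison of label sequences -/
def lexLe (l m : List (ℕ × ℕ)) : Prop := l = m ∨ List.Lex pairLt l m

/-- the Jordan-Hölder sequence of labels of a chain -/
noncomputable def labels (c : List (Fin n → ℕ)) : List (ℕ × ℕ) :=
  List.zipWith Flabel c c.tail

/-- a maximal chain in the interval `[x,y]` -/
def RookMaxChain (n : ℕ) (x y : Fin n → ℕ) (c : List (Fin n → ℕ)) : Prop :=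
  c.Chain' (RookCov n) ∧ c.head? = some x ∧ c.getLast? = some y

/-- a permutation of `{1,...,n}` in one-line notation -/
def IsPerm (n : ℕ) (a : Fin n → ℕ) : Prop :=
  (∀ i, 1 ≤ a i ∧ a i ≤ n) ∧ Function.Injective a

/-- the strong Bruhat order on `S_n` -/
def BruhatLe (n : ℕ) (a b : Fin n → ℕ) : Prop :=
  Relation.ReflTransGen (fun x y => IsPerm n x ∧ IsPerm n y ∧ Step2 x y) a b


lemma icc_sum_choose (n : ℕ) : ∑ v ∈ Finset.Icc 1 n, v = Nat.choose (n + 1) 2 := by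
  have h2 : (∑ v ∈ Finset.Icc 1 n, v) * 2 = n * (n + 1) := by
    induction n with
    | zero => simp
    | succ k ih => rw [Finset.sum_Icc_succ_top (by omega)]; ring_nf; ring_nf at ih; omega
  rw [Nat.choose_two_right]
  have h3 : (n + 1) * (n + 1 - 1) = n * (n + 1) := by simp [Nat.mul_comm]
  omega

lemma perm_of_rook_nonzero {a : Fin n → ℕ} (h : IsRook n a) (hz : ∀ i, a i ≠ 0) :
    IsPerm n a :=
  ⟨fun i => ⟨Nat.one_le_iff_ne_zero.2 (hz i), h.1 i⟩, fun i j hij => h.2 i j (hz i) hij⟩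

lemma rook_of_perm {a : Fin n → ℕ} (h : IsPerm n a) : IsRook n a :=
  ⟨fun i => (h.1 i).2, fun i j _ e => h.2 e⟩

lemma sum_perm {a : Fin n → ℕ} (h : IsPerm n a) : ∑ i, a i = Nat.choose (n + 1) 2 := by
  classical
  have himg : (univ.image a) = Finset.Icc 1 n := by
    apply Finset.eq_of_subset_of_card_le
    · intro v hv
      simp only [Finset.mem_image, Finset.mem_univ, true_and] at hv
      obtain ⟨i, rfl⟩ := hv
      exact Finset.mem_Icc.2 (h.1 i)
    · rw [Finset.card_image_of_injective _ h.2]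
      simp [Nat.card_Icc]
  rw [← icc_sum_choose, ← himg, Finset.sum_image (fun i _ j _ e => h.2 e)]

lemma rook_sum_le {a : Fin n → ℕ} (h : IsRook n a) : ∑ i, a i ≤ Nat.choose (n + 1) 2 := by
  classical
  have h1 : ∑ i ∈ univ.filter (fun i => a i ≠ 0), a i = ∑ i, a i :=
    Finset.sum_filter_ne_zero univ
  have h2 : ∑ v ∈ (univ.filter (fun i => a i ≠ 0)).image a, v
      = ∑ i ∈ univ.filter (fun i => a i ≠ 0), a i := by
    apply Finset.sum_image
    intro i hi j hj e
    exact h.2 i j (Finset.mem_filter.1 hi).2 e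
  rw [← h1, ← h2, ← icc_sum_choose]
  apply Finset.sum_le_sum_of_subset
  intro v hv
  simp only [Finset.mem_image, Finset.mem_filter, Finset.mem_univ, true_and] at hv
  obtain ⟨i, hi, rfl⟩ := hv
  exact Finset.mem_Icc.2 ⟨Nat.one_le_iff_ne_zero.2 hi, h.1 i⟩

lemma step2_comp {a b : Fin n → ℕ} (h : Step2 a b) : ∃ e : Equiv.Perm (Fin n), b = a ∘ e := by
  obtain ⟨i, j, hij, _, hbi, hbj, hk⟩ := h
  refine ⟨Equiv.swap i j, funext fun k => ?_⟩
  rcases eq_or_ne k i with rfl | hki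
  · simp [hbi, Equiv.swap_apply_left]
  rcases eq_or_ne k j with rfl | hkj
  · simp [hbj, Equiv.swap_apply_right]
  · simp [Equiv.swap_apply_of_ne_of_ne hki hkj, (hk k hki hkj).symm]

lemma rookLe_to_bruhat {a b : Fin n → ℕ} (h : RookLe n a b) (ha : IsPerm n a) :
    IsPerm n b ∧ BruhatLe n a b := by
  induction h with
  | refl => exact ⟨ha, Relation.ReflTransGen.refl⟩
  | @tail m c hm step ih =>
    obtain ⟨hpm, hab⟩ := ih
    obtain ⟨_, hrc, hs⟩ := step
    rcases hs with ⟨i, hi, hj⟩ | h2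
    · exfalso
      have hlt : ∑ k, m k < ∑ k, c k :=
        Finset.sum_lt_sum (fun j _ => by
          rcases eq_or_ne j i with rfl | hne
          · exact hi.le
          · exact (hj j hne).le) ⟨i, Finset.mem_univ i, hi⟩
      have hle := rook_sum_le hrc
      rw [sum_perm hpm] at hlt
      omega
    · have hpc : IsPerm n c := by
        obtain ⟨e, he⟩ := step2_comp h2
        exact he ▸ ⟨fun i => hpm.1 (e i), hpm.2.comp e.injective⟩
      exact ⟨hpc, Relation.ReflTransGen.tail hab ⟨hpm, hpc, h2⟩⟩

theorem symmetric_group_in_rook_monoid (n : ℕ) :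
    (∀ a : Fin n → ℕ, IsRook n a →
      ((∀ i, a i ≠ 0) ↔ (IsPerm n a ∧ rlen a = Nat.choose (n + 1) 2 + rinv a))) ∧
    (∀ a b : Fin n → ℕ, IsPerm n a → IsPerm n b →
      (RookLe n a b ↔ BruhatLe n a b)) := by
  constructor
  · intro a ha
    constructor
    · intro hz
      have hp := perm_of_rook_nonzero ha hz
      exact ⟨hp, by rw [rlen, sum_perm hp]⟩
    · rintro ⟨hp, -⟩ i
      exact Nat.one_le_iff_ne_zero.1 (hp.1 i).1
  · intro a b ha hb
    constructor
    · exact fun h => (rookLe_to_bruhat h ha).2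
    · exact fun h => Relation.ReflTransGen.mono
        (fun x y hxy => ⟨rook_of_perm hxy.1, rook_of_perm hxy.2.1, Or.inr hxy.2.2⟩) _ _ h
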